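/- Let ρ : ℝ → ℝ be continuous and nonnegative, with ρ(x) = 0 for |x| > 1 and ∫_ℝ ρ(x) dx = 1. Let a ∈ (0,1), η > 0, I ≥ 0, and p ∈ ℕ*. Then ∫₀^a I·η·ρ(η(x−a))·sin²(pπx/a) dx ≤ I·p²π²/(a²η²). -/

import Mathlib

open MeasureTheory intervalIntegral

lemma sin_sq_aux (p : ℕ) (a x : ℝ) (ha : 0 < a) (hx0 : 0 ≤ x) (hxa : x ≤ a) :
    Real.sin ((p : ℝ) * Real.pi * x / a) ^ 2 ≤ ((p : ℝ) * Real.pi * (a - x) / a) ^ 2 := by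
  have h : (p : ℝ) * Real.pi * x / a
      = (p : ℝ) * Real.pi - (p : ℝ) * Real.pi * (a - x) / a := by
    field_simp; ring
  rw [h, Real.sin_sub, Real.sin_nat_mul_pi]
  have hcos : Real.cos ((p : ℝ) * Real.pi) ^ 2 = 1 := by
    have := Real.sin_sq_add_cos_sq ((p : ℝ) * Real.pi)
    rw [Real.sin_nat_mul_pi] at this; linarith
  have hb := Real.sin_sq_le_sq (x := (p : ℝ) * Real.pi * (a - x) / a)
  calc (0 * Real.cos ((p:ℝ) * Real.pi * (a - x) / a)
        - Real.cos ((p:ℝ) * Real.pi) * Real.sin ((p:ℝ) * Real.pi * (a - x) / a)) ^ 2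
      = Real.cos ((p:ℝ) * Real.pi) ^ 2 * Real.sin ((p:ℝ) * Real.pi * (a - x) / a) ^ 2 := by ring
    _ = Real.sin ((p:ℝ) * Real.pi * (a - x) / a) ^ 2 := by rw [hcos]; ring
    _ ≤ _ := hb

/-- The potential-energy term of the Rayleigh quotient of a left eigenmode:
`∫₀^a I·η·ρ(η(x-a))·sin²(pπx/a) dx ≤ I·p²π²/(a²η²)`. -/
theorem stmt_4
    (ρ : ℝ → ℝ) (hρc : Continuous ρ) (hρ0 : ∀ x, 0 ≤ ρ x)
    (hρsupp : ∀ x : ℝ, 1 < |x| → ρ x = 0)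
    (hρint : ∫ x : ℝ, ρ x = 1)
    (a η I : ℝ) (ha : a ∈ Set.Ioo (0 : ℝ) 1) (hη : 0 < η) (hI : 0 ≤ I)
    (p : ℕ) (hp : 0 < p) :
    (∫ x in (0 : ℝ)..a, I * η * ρ (η * (x - a)) * Real.sin (p * Real.pi * x / a) ^ 2) ≤
      I * p ^ 2 * Real.pi ^ 2 / (a ^ 2 * η ^ 2) := by
  obtain ⟨ha0, ha1⟩ := ha
  have hπ := Real.pi_pos
  set C : ℝ := (p : ℝ) ^ 2 * Real.pi ^ 2 / (a ^ 2 * η ^ 2) with hC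
  -- integrability of ρ on ℝ
  have hcs : HasCompactSupport ρ := by
    apply HasCompactSupport.intro (isCompact_Icc (a := (-1:ℝ)) (b := 1))
    intro x hx
    apply hρsupp
    simp only [Set.mem_Icc, not_and_or, not_le] at hx
    rw [lt_abs]
    rcases hx with h | h
    · right; linarith
    · left; linarith
  have hρInt : Integrable ρ := hρc.integrable_of_hasCompactSupport hcs
  -- pointwise bound
  have hkey : ∀ x ∈ Set.Icc (0:ℝ) a,
      I * η * ρ (η * (x - a)) * Real.sin (p * Real.pi * x / a) ^ 2
        ≤ I * C * (η * ρ (η * (x - a))) := by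
    intro x hx
    obtain ⟨hx0, hxa⟩ := hx
    by_cases hz : ρ (η * (x - a)) = 0
    · rw [hz]; ring_nf; simp
    · have habs : |η * (x - a)| ≤ 1 := by
        by_contra hc
        exact hz (hρsupp _ (lt_of_not_ge hc))
      have hax : a - x ≤ 1 / η := by
        rw [abs_le] at habs
        have := habs.1
        rw [le_div_iff₀ hη]
        nlinarith
      have h1 : Real.sin ((p:ℝ) * Real.pi * x / a) ^ 2 ≤ C := by
        refine (sin_sq_aux p a x ha0 hx0 hxa).trans ?_
        rw [hC]
        rw [div_pow, div_le_div_iff₀ (by positivity) (by positivity)]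
        have h2 : ((p:ℝ) * Real.pi * (a - x)) ^ 2 ≤ ((p:ℝ) * Real.pi / η) ^ 2 := by
          have hax0 : (0:ℝ) ≤ a - x := by linarith
          have h0 : (0:ℝ) ≤ (p:ℝ) * Real.pi * (a - x) :=
            mul_nonneg (by positivity) hax0
          apply sq_le_sq'
          · have : (0:ℝ) ≤ (p:ℝ) * Real.pi / η := by positivity
            linarith
          · calc (p:ℝ) * Real.pi * (a - x) ≤ (p:ℝ) * Real.pi * (1/η) := by
                  apply mul_le_mul_of_nonneg_left hax (by positivity)
              _ = (p:ℝ) * Real.pi / η := by ring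
        calc ((p:ℝ) * Real.pi * (a - x)) ^ 2 * (a ^ 2 * η ^ 2)
            ≤ ((p:ℝ) * Real.pi / η) ^ 2 * (a ^ 2 * η ^ 2) := by
              apply mul_le_mul_of_nonneg_right h2 (by positivity)
          _ = (p:ℝ)^2 * Real.pi^2 * a^2 := by field_simp
      have hρpos := hρ0 (η * (x - a))
      calc I * η * ρ (η * (x - a)) * Real.sin ((p:ℝ) * Real.pi * x / a) ^ 2
          ≤ I * η * ρ (η * (x - a)) * C := by
            apply mul_le_mul_of_nonneg_left h1 (by positivity)
        _ = I * C * (η * ρ (η * (x - a))) := by ring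
  -- integrability on the interval
  have hc1 : Continuous fun x => I * η * ρ (η * (x - a)) * Real.sin ((p:ℝ) * Real.pi * x / a) ^ 2 := by
    apply Continuous.mul
    · exact continuous_const.mul (hρc.comp (continuous_const.mul (continuous_id.sub continuous_const)))
    · exact (Real.continuous_sin.comp ((continuous_const.mul continuous_id).div_const a)).pow 2
  have hc2 : Continuous fun x : ℝ => I * C * (η * ρ (η * (x - a))) :=
    continuous_const.mul (continuous_const.mul (hρc.comp (continuous_const.mul (continuous_id.sub continuous_const))))
  have hmono := intervalIntegral.integral_mono_on ha0.le
    (hc1.intervalIntegrable (μ := volume) 0 a) (hc2.intervalIntegrable (μ := volume) 0 a) hkey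
  refine hmono.trans ?_
  -- compute the RHS integral
  have hsub : (∫ x in (0:ℝ)..a, η * ρ (η * (x - a))) = ∫ x in (η * 0 - η * a)..(η * a - η * a), ρ x := by
    have e1 : (∫ x in (0:ℝ)..a, η * ρ (η * (x - a)))
        = η • ∫ x in (0:ℝ)..a, ρ (η * x - η * a) := by
      rw [intervalIntegral.integral_const_mul, smul_eq_mul]
      congr 1
      apply intervalIntegral.integral_congr
      intro x _
      ring_nf
    rw [e1, intervalIntegral.smul_integral_comp_mul_sub ρ η (η * a)]
  have hle1 : (∫ x in (0:ℝ)..a, η * ρ (η * (x - a))) ≤ 1 := by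
    rw [hsub, ← hρint]
    rw [intervalIntegral.integral_of_le (by nlinarith : η * 0 - η * a ≤ η * a - η * a)]
    exact setIntegral_le_integral hρInt (Filter.Eventually.of_forall hρ0)
  have : (∫ x in (0:ℝ)..a, I * C * (η * ρ (η * (x - a))))
      = I * C * ∫ x in (0:ℝ)..a, η * ρ (η * (x - a)) := by
    rw [intervalIntegral.integral_const_mul]
  rw [this]
  have hIC : 0 ≤ I * C := by positivity
  calc I * C * ∫ x in (0:ℝ)..a, η * ρ (η * (x - a)) ≤ I * C * 1 :=
        mul_le_mul_of_nonneg_left hle1 hIC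
    _ = I * (p:ℝ)^2 * Real.pi^2 / (a^2 * η^2) := by rw [hC]; field_simp
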